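/- Let G ≤ Sₙ be a doubly transitive permutation group with Aₙ ⊄ G. Then every nonidentity element of G moves at least n/4 points. -/

import Mathlib

set_option linter.unusedSectionVars false
set_option linter.unusedVariables false
set_option linter.unreachableTactic false
set_option linter.unnecessarySeqFocus false
set_option linter.unusedTactic false

open Equiv Equiv.Perm Finset
open scoped Classical

theorem Equiv.Perm.apply_inv_self {α : Type*} (f : Perm α) (x : α) : f (f⁻¹ x) = x :=
  f.apply_symm_apply x

theorem Equiv.Perm.inv_apply_self {α : Type*} (f : Perm α) (x : α) : f⁻¹ (f x) = x :=
  f.symm_apply_apply x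

section GenericAux
variable {α : Type*} [DecidableEq α] [Fintype α]

lemma comm_support_subset (g h : Perm α) :
    (g * h * g⁻¹ * h⁻¹).support ⊆
      (g.support ∩ h.support) ∪ (g.support ∩ h.support).image g
        ∪ (g.support ∩ h.support).image h := by
  intro x hx
  rw [mem_support] at hx
  have cform : g (h (g⁻¹ (h⁻¹ x))) ≠ x := hx
  simp only [mem_union, mem_inter, mem_image, mem_support]
  have key1 : h x ≠ x ∨ h (g⁻¹ x) ≠ g⁻¹ x := by
    by_contra hc
    push_neg at hc
    obtain ⟨h1, h2⟩ := hc
    have hinv : h⁻¹ x = x := by rw [Perm.inv_eq_iff_eq, h1]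
    exact cform (by rw [hinv, h2, Perm.apply_inv_self])
  have key2 : g x ≠ x ∨ g (h⁻¹ x) ≠ h⁻¹ x := by
    by_contra hc
    push_neg at hc
    obtain ⟨h1, h2⟩ := hc
    have hinv : g⁻¹ (h⁻¹ x) = h⁻¹ x := by rw [Perm.inv_eq_iff_eq, h2]
    exact cform (by rw [hinv, Perm.apply_inv_self, h1])
  by_cases hhx : h x = x
  · by_cases hgx : g x = x
    · exfalso
      have hginv : g⁻¹ x = x := by rw [Perm.inv_eq_iff_eq, hgx]
      rcases key1 with k | k
      · exact k hhx
      · rw [hginv] at k; exact k hhx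
    · -- x ∈ g.support, h x = x : use key1 right branch
      have k : h (g⁻¹ x) ≠ g⁻¹ x := by
        rcases key1 with k | k
        · exact absurd hhx k
        · exact k
      refine Or.inl (Or.inr ⟨g⁻¹ x, ⟨?_, k⟩, Perm.apply_inv_self g x⟩)
      rw [Perm.apply_inv_self]
      intro he
      exact hgx (by nth_rewrite 1 [he]; exact Perm.apply_inv_self g x)
  · by_cases hgx : g x = x
    · have k : g (h⁻¹ x) ≠ h⁻¹ x := by
        rcases key2 with k | k
        · exact absurd hgx k
        · exact k
      refine Or.inr ⟨h⁻¹ x, ⟨k, ?_⟩, Perm.apply_inv_self h x⟩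
      rw [Perm.apply_inv_self]
      intro he
      exact hhx (by nth_rewrite 1 [he]; exact Perm.apply_inv_self h x)
    · exact Or.inl (Or.inl ⟨hgx, hhx⟩)


def rho (u v w : α) : Perm α := Equiv.swap u w * Equiv.swap u v

lemma rho_apply_v (u v w : α) : rho u v w v = w := by
  simp only [rho, Perm.mul_apply, Equiv.swap_apply_right, Equiv.swap_apply_left]
lemma rho_apply_u {u v w : α} (hvu : v ≠ u) (hvw : v ≠ w) : rho u v w u = v := by
  simp only [rho, Perm.mul_apply, Equiv.swap_apply_left]
  exact Equiv.swap_apply_of_ne_of_ne hvu hvw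
lemma rho_apply_w {u v w : α} (hwu : w ≠ u) (hwv : w ≠ v) : rho u v w w = u := by
  simp only [rho, Perm.mul_apply]
  rw [Equiv.swap_apply_of_ne_of_ne hwu hwv, Equiv.swap_apply_right]
lemma rho_apply_other {u v w z : α} (hu : z ≠ u) (hv : z ≠ v) (hw : z ≠ w) :
    rho u v w z = z := by
  simp only [rho, Perm.mul_apply]
  rw [Equiv.swap_apply_of_ne_of_ne hu hv, Equiv.swap_apply_of_ne_of_ne hu hw]
lemma rho_conj (σ : Perm α) (u v w : α) :
    σ * rho u v w * σ⁻¹ = rho (σ u) (σ v) (σ w) := by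
  simp only [rho, Equiv.swap_apply_apply]; group
lemma rho_cyclic {u v w : α} (huv : u ≠ v) (hvw : v ≠ w) (huw : u ≠ w) :
    rho v w u = rho u v w := by
  ext x
  simp only [rho, Perm.mul_apply, Equiv.swap_apply_def]
  split_ifs <;> simp_all
lemma rho_inv {u v w : α} (huv : u ≠ v) (hvw : v ≠ w) (huw : u ≠ w) :
    (rho u v w)⁻¹ = rho u w v := by
  rw [eq_comm, eq_inv_iff_mul_eq_one]
  ext x
  simp only [rho, Perm.mul_apply, Equiv.swap_apply_def, Perm.one_apply]
  split_ifs <;> simp_all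
set_option maxHeartbeats 2000000 in
lemma rho_mul {u v w z : α} (huv : u ≠ v) (hvw : v ≠ w) (huw : u ≠ w)
    (hzu : z ≠ u) (hzv : z ≠ v) (hzw : z ≠ w) :
    (rho u z w) * (rho u v z) = rho u v w := by
  ext x
  by_cases hxu : x = u
  · subst hxu; simp only [rho, Perm.mul_apply, Equiv.swap_apply_def]
    split_ifs <;> simp_all
  · by_cases hxv : x = v
    · subst hxv; simp only [rho, Perm.mul_apply, Equiv.swap_apply_def]
      split_ifs <;> simp_all
    · by_cases hxw : x = w
      · subst hxw; simp only [rho, Perm.mul_apply, Equiv.swap_apply_def]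
        split_ifs <;> simp_all
      · by_cases hxz : x = z
        · subst hxz; simp only [rho, Perm.mul_apply, Equiv.swap_apply_def]
          split_ifs <;> simp_all
        · simp only [rho, Perm.mul_apply, Equiv.swap_apply_def]
          split_ifs <;> simp_all


lemma perm_eq_rho (σ : Perm α) (h3 : σ.support.card = 3) :
    ∃ u v w, u ≠ v ∧ v ≠ w ∧ u ≠ w ∧ σ = rho u v w := by
  have hne : σ.support.Nonempty := by
    rw [← Finset.card_pos, h3]; norm_num
  obtain ⟨u, hu⟩ := hne
  set v := σ u with hv
  set w := σ v with hw
  have hvu : v ≠ u := mem_support.1 hu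
  have hvsupp : v ∈ σ.support := apply_mem_support.2 hu
  have hwv : w ≠ v := mem_support.1 hvsupp
  have hwsupp : w ∈ σ.support := apply_mem_support.2 hvsupp
  -- w ≠ u
  have hwu : w ≠ u := by
    intro hwu
    -- a third point
    have hlt : ({u, v} : Finset α).card < σ.support.card := by
      rw [h3]
      exact lt_of_le_of_lt (card_insert_le _ _) (by simp)
    obtain ⟨z, hz⟩ := exists_of_ssubset ⟨by
      intro t ht
      simp only [mem_insert, mem_singleton] at ht
      rcases ht with rfl | rfl
      exacts [hu, hvsupp], fun hsub => absurd (card_le_card hsub) (not_le.2 hlt)⟩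
    obtain ⟨hzsupp, hz'⟩ := hz
    simp only [mem_insert, mem_singleton, not_or] at hz'
    obtain ⟨hzu, hzv⟩ := hz'
    have hsub : ({u, v, z} : Finset α) ⊆ σ.support := by
      intro t ht
      simp only [mem_insert, mem_singleton] at ht
      rcases ht with rfl | rfl | rfl
      exacts [hu, hvsupp, hzsupp]
    have hcards : ({u, v, z} : Finset α).card = 3 := by
      rw [card_insert_of_notMem (by simp [hvu.symm, hzu, Ne.symm hzu]),
        card_insert_of_notMem (by simp [hzv, Ne.symm hzv]), card_singleton]
    have hsupp_eq : σ.support = {u, v, z} :=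
      (Finset.eq_of_subset_of_card_le hsub (by rw [h3, hcards])).symm
    have hσz : σ z ∈ σ.support := apply_mem_support.2 hzsupp
    rw [hsupp_eq] at hσz
    simp only [mem_insert, mem_singleton] at hσz
    have h1 : σ z ≠ v := fun h => hzu (σ.injective (h.trans hv))
    have h2 : σ z ≠ u := by
      intro h
      apply hzv
      have : σ z = σ v := by rw [h, ← hwu, hw]
      exact σ.injective this
    rcases hσz with h | h | h
    exacts [h2 h, h1 h, mem_support.1 hzsupp h]
  -- support = {u, v, w}
  have hsub : ({u, v, w} : Finset α) ⊆ σ.support := by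
    intro t ht
    simp only [mem_insert, mem_singleton] at ht
    rcases ht with rfl | rfl | rfl
    exacts [hu, hvsupp, hwsupp]
  have hcards : ({u, v, w} : Finset α).card = 3 := by
    rw [card_insert_of_notMem (by simp [hvu.symm, hwu.symm]),
      card_insert_of_notMem (by simp [hwv.symm]), card_singleton]
  have hsupp_eq : σ.support = {u, v, w} :=
    (Finset.eq_of_subset_of_card_le hsub (by rw [h3, hcards])).symm
  have hσw : σ w = u := by
    have h1 : σ w ∈ σ.support := apply_mem_support.2 hwsupp
    rw [hsupp_eq] at h1
    simp only [mem_insert, mem_singleton] at h1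
    have h2 : σ w ≠ v := fun h => hwu (σ.injective (h.trans hv))
    have h3' : σ w ≠ w := fun h => hwv (σ.injective (h.trans hw))
    rcases h1 with h | h | h
    exacts [h, absurd h h2, absurd h h3']
  refine ⟨u, v, w, hvu.symm, hwv.symm, hwu.symm, ?_⟩
  ext x
  by_cases hxu : x = u
  · rw [hxu, rho_apply_u hvu hwv.symm, hv]
  · by_cases hxv : x = v
    · rw [hxv, rho_apply_v, hw]
    · by_cases hxw : x = w
      · rw [hxw, rho_apply_w hwu hwv, hσw]
      · rw [rho_apply_other hxu hxv hxw]
        have : x ∉ σ.support := by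
          rw [hsupp_eq]; simp [hxu, hxv, hxw]
        exact notMem_support.1 this

end GenericAux

section CountingAux

variable {n : ℕ} (G : Subgroup (Perm (Fin n)))
  (h2 : ∀ a b c d : Fin n, a ≠ b → c ≠ d → ∃ σ ∈ G, σ a = c ∧ σ b = d)


include h2 in
lemma rho_all_mem {a b c : Fin n} (hab : a ≠ b) (hbc : b ≠ c) (hac : a ≠ c)
    (hg : rho a b c ∈ G) :
    ∀ u v w : Fin n, u ≠ v → v ≠ w → u ≠ w → rho u v w ∈ G := by
  have P : ∀ u v : Fin n, u ≠ v → ∃ z, z ≠ u ∧ z ≠ v ∧ rho u v z ∈ G := by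
    intro u v huv
    obtain ⟨σ, hσ, ha, hb⟩ := h2 a b u v hab huv
    refine ⟨σ c, ?_, ?_, ?_⟩
    · rw [← ha]; exact fun h => hac (σ.injective h).symm
    · rw [← hb]; exact fun h => hbc (σ.injective h).symm
    · have := G.mul_mem (G.mul_mem hσ hg) (G.inv_mem hσ)
      rwa [rho_conj, ha, hb] at this
  intro u v w huv hvw huw
  obtain ⟨z, hzu, hzv, hA⟩ := P u v huv
  by_cases hzw' : z = w
  · rwa [hzw'] at hA
  have hzw : z ≠ w := hzw'
  obtain ⟨y, hyz, hyw, hB⟩ := P z w hzw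
  by_cases hyu : y = u
  · rw [hyu] at hB
    -- hB : rho z w u ∈ G
    have hC : (rho z w u)⁻¹ * rho u v z * ((rho z w u)⁻¹)⁻¹ ∈ G :=
      G.mul_mem (G.mul_mem (G.inv_mem hB) hA) (G.inv_mem (G.inv_mem hB))
    rw [rho_conj] at hC
    have hBinv : (rho z w u)⁻¹ = rho z u w := rho_inv hzw (Ne.symm huw) hzu
    have e1 : (rho z w u)⁻¹ u = w := by rw [hBinv]; exact rho_apply_v z u w
    have e2 : (rho z w u)⁻¹ v = v := by
      rw [hBinv]; exact rho_apply_other hzv.symm (Ne.symm huv) hvw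
    have e3 : (rho z w u)⁻¹ z = u := by
      rw [hBinv]; exact rho_apply_u hzu.symm huw
    rw [e1, e2, e3] at hC
    -- hC : rho w v u ∈ G
    have key : rho u v w = (rho w v u)⁻¹ := by
      rw [rho_inv hvw.symm huv.symm huw.symm]
      exact rho_cyclic (Ne.symm huw) huv (Ne.symm hvw)
    rw [key]
    exact G.inv_mem hC
  by_cases hyv : y = v
  · rw [hyv] at hB
    -- hB : rho z w v ∈ G
    have hD : rho z w v * rho u v z * (rho z w v)⁻¹ ∈ G :=
      G.mul_mem (G.mul_mem hB hA) (G.inv_mem hB)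
    rw [rho_conj] at hD
    have e1 : rho z w v u = u := rho_apply_other hzu.symm huw huv
    have e2 : rho z w v v = z := rho_apply_w hzv.symm hvw
    have e3 : rho z w v z = w := rho_apply_u (Ne.symm hzw) (Ne.symm hvw)
    rw [e1, e2, e3] at hD
    -- hD : rho u z w ∈ G
    rw [← rho_mul huv hvw huw hzu hzv hzw]
    exact G.mul_mem hD hA
  · have hD : rho z w y * rho u v z * (rho z w y)⁻¹ ∈ G :=
      G.mul_mem (G.mul_mem hB hA) (G.inv_mem hB)
    rw [rho_conj] at hD
    have e1 : rho z w y u = u :=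
      rho_apply_other hzu.symm huw (fun h => hyu h.symm)
    have e2 : rho z w y v = v :=
      rho_apply_other hzv.symm hvw (fun h => hyv h.symm)
    have e3 : rho z w y z = w := rho_apply_u (Ne.symm hzw) (Ne.symm hyw)
    rw [e1, e2, e3] at hD
    exact hD



noncomputable def Cset (G : Subgroup (Perm (Fin n))) (u v u' v' : Fin n) :
    Finset (Perm (Fin n)) :=
  univ.filter (fun x => x ∈ G ∧ x u = u' ∧ x v = v')

include h2 in
lemma Cset_nonempty {u v u' v' : Fin n} (huv : u ≠ v) (huv' : u' ≠ v') :
    (Cset G u v u' v').Nonempty := by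
  obtain ⟨σ, hσ, h1, h2'⟩ := h2 u v u' v' huv huv'
  exact ⟨σ, by simp [Cset, hσ, h1, h2']⟩

include h2 in
lemma Cset_card_target {u v u' v' u'' v'' : Fin n} (huv' : u' ≠ v') (huv'' : u'' ≠ v'') :
    (Cset G u v u' v').card = (Cset G u v u'' v'').card := by
  obtain ⟨σ, hσ, h1, h2'⟩ := h2 u' v' u'' v'' huv' huv''
  apply Finset.card_bij' (fun x _ => σ * x) (fun x _ => σ⁻¹ * x)
  · intro x hx
    simp only [Cset, mem_filter, mem_univ, true_and] at hx ⊢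
    exact ⟨G.mul_mem hσ hx.1, by simp [Perm.mul_apply, hx.2.1, h1],
      by simp [Perm.mul_apply, hx.2.2, h2']⟩
  · intro x hx
    simp only [Cset, mem_filter, mem_univ, true_and] at hx ⊢
    refine ⟨G.mul_mem (G.inv_mem hσ) hx.1, ?_, ?_⟩
    · simp only [Perm.mul_apply, hx.2.1, ← h1, Perm.inv_apply_self]
    · simp only [Perm.mul_apply, hx.2.2, ← h2', Perm.inv_apply_self]
  · intro x _; simp [mul_assoc]
  · intro x _; simp [mul_assoc]

include h2 in
lemma Cset_card_source {u v u' v' u₂ v₂ : Fin n} (huv : u ≠ v) (hu2v2 : u₂ ≠ v₂) :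
    (Cset G u v u' v').card = (Cset G u₂ v₂ u' v').card := by
  obtain ⟨σ, hσ, h1, h2'⟩ := h2 u₂ v₂ u v hu2v2 huv
  apply Finset.card_bij' (fun x _ => x * σ) (fun x _ => x * σ⁻¹)
  · intro x hx
    simp only [Cset, mem_filter, mem_univ, true_and] at hx ⊢
    exact ⟨G.mul_mem hx.1 hσ, by simp [Perm.mul_apply, h1, hx.2.1],
      by simp [Perm.mul_apply, h2', hx.2.2]⟩
  · intro x hx
    simp only [Cset, mem_filter, mem_univ, true_and] at hx ⊢
    refine ⟨G.mul_mem hx.1 (G.inv_mem hσ), ?_, ?_⟩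
    · have e : σ⁻¹ u = u₂ := by rw [← h1, Perm.inv_apply_self]
      simp [Perm.mul_apply, e, hx.2.1]
    · have e : σ⁻¹ v = v₂ := by rw [← h2', Perm.inv_apply_self]
      simp [Perm.mul_apply, e, hx.2.2]
  · intro x _; simp [mul_assoc]
  · intro x _; simp [mul_assoc]

include h2 in
lemma Cset_card_eq {u v u' v' u₂ v₂ u₂' v₂' : Fin n} (huv : u ≠ v) (huv' : u' ≠ v')
    (h2uv : u₂ ≠ v₂) (h2uv' : u₂' ≠ v₂') :
    (Cset G u v u' v').card = (Cset G u₂ v₂ u₂' v₂').card :=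
  (Cset_card_source G h2 huv h2uv).trans (Cset_card_target G h2 huv' h2uv')


section PerX


variable {g x : Perm (Fin n)} {α : Fin n}

/-- the intersection of supports equals `insert α (x-image of the witness set)` -/
lemma E_structure (hα : α ∈ g.support) (hxα : x α = α) (hxβ : x (g α) ∉ g.support) :
    g.support ∩ (x * g * x⁻¹).support =
      insert α ((((g.support \ {α, g α}).filter (fun s => x s ∈ g.support))).image x) := by
  have hsupp : (x * g * x⁻¹).support = g.support.image x := by
    rw [Equiv.Perm.support_conj, Finset.map_eq_image]; rfl
  ext e
  simp only [mem_inter, hsupp, mem_insert, mem_image, mem_filter, mem_sdiff,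
    mem_singleton, mem_insert]
  constructor
  · rintro ⟨heS, s, hsS, rfl⟩
    by_cases hsα : s = α
    · left; rw [hsα, hxα]
    · right
      refine ⟨s, ⟨⟨hsS, ?_⟩, heS⟩, rfl⟩
      push_neg
      refine ⟨hsα, ?_⟩
      intro hsβ
      rw [hsβ] at heS
      exact hxβ heS
  · rintro (he | ⟨s, ⟨⟨hsS, _⟩, hxs⟩, he⟩)
    · rw [he]; exact ⟨hα, α, hα, hxα⟩
    · rw [← he]; exact ⟨hxs, s, hsS, rfl⟩

lemma alpha_not_mem_image (hα : α ∈ g.support) (hxα : x α = α) :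
    α ∉ (((g.support \ {α, g α}).filter (fun s => x s ∈ g.support))).image x := by
  intro hmem
  rw [mem_image] at hmem
  obtain ⟨s, hsK, hxs⟩ := hmem
  rw [mem_filter, mem_sdiff] at hsK
  have hsα : s ≠ α := by
    intro h
    apply hsK.1.2
    rw [h]
    simp
  exact hsα (x.injective (hxs.trans hxα.symm))

lemma t_ne_one (hα : α ∈ g.support) (hxα : x α = α) (hxβ : x (g α) ∉ g.support) :
    g * (x * g * x⁻¹) * g⁻¹ * (x * g * x⁻¹)⁻¹ ≠ 1 := by
  intro ht
  set h := x * g * x⁻¹ with hh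
  have hcomm : g * h * g⁻¹ = h := by
    rwa [mul_inv_eq_one] at ht
  have hcomm2 : h * g * h⁻¹ = g := by
    have : g * h = h * g := by
      have := congrArg (· * g) hcomm
      simpa [mul_assoc] using this
    rw [← this]; group
  have hsupp : g.support = g.support.map h.toEmbedding := by
    conv_lhs => rw [← hcomm2, Equiv.Perm.support_conj]
  have hαmem : h α ∈ g.support := by
    rw [hsupp]
    exact mem_map_of_mem _ hα
  have hxinv : x⁻¹ α = α := by rw [← hxα, Perm.inv_apply_self, hxα]
  rw [hh] at hαmem
  simp only [Perm.mul_apply, hxinv] at hαmem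
  exact hxβ hαmem

/-- Key pointwise estimate -/
lemma key_pointwise (hgG : g ∈ G) (hxG : x ∈ G)
    (hmin : ∀ y ∈ G, y ≠ 1 → g.support.card ≤ y.support.card)
    (hα : α ∈ g.support) (hxα : x α = α) (hxβ : x (g α) ∉ g.support) :
    g.support.card ≤
      3 * (1 + (((g.support \ {α, g α}).filter (fun s => x s ∈ g.support))).card) := by
  set h := x * g * x⁻¹ with hh
  set t := g * h * g⁻¹ * h⁻¹ with hht
  have htG : t ∈ G := by
    refine G.mul_mem (G.mul_mem (G.mul_mem hgG ?_) (G.inv_mem hgG)) (G.inv_mem ?_) <;>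
      exact G.mul_mem (G.mul_mem hxG hgG) (G.inv_mem hxG)
  have htne : t ≠ 1 := t_ne_one hα hxα hxβ
  have h1 : g.support.card ≤ t.support.card := hmin t htG htne
  set E := g.support ∩ h.support with hE
  have h2 : t.support.card ≤ 3 * E.card := by
    calc t.support.card ≤ (E ∪ E.image g ∪ E.image h).card :=
          card_le_card (comm_support_subset g h)
      _ ≤ (E ∪ E.image g).card + (E.image h).card := card_union_le _ _
      _ ≤ E.card + (E.image g).card + (E.image h).card := by
          have := card_union_le E (E.image g); omega
      _ ≤ E.card + E.card + E.card := by
          have := card_image_le (s := E) (f := g)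
          have := card_image_le (s := E) (f := h)
          omega
      _ = 3 * E.card := by ring
  have h3 : E.card = 1 + (((g.support \ {α, g α}).filter (fun s => x s ∈ g.support))).card := by
    rw [hE, hh, E_structure hα hxα hxβ,
      card_insert_of_notMem (alpha_not_mem_image hα hxα),
      card_image_of_injective _ x.injective]
    omega
  omega

/-- refined: if the witness set is `{s}` with `x s = g α` then `m ≤ 5`. -/
lemma key_refined (hgG : g ∈ G) (hxG : x ∈ G)
    (hmin : ∀ y ∈ G, y ≠ 1 → g.support.card ≤ y.support.card)
    (hα : α ∈ g.support) (hxα : x α = α) (hxβ : x (g α) ∉ g.support)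
    {s : Fin n}
    (hKs : ((g.support \ {α, g α}).filter (fun s => x s ∈ g.support)) = {s})
    (hxs : x s = g α) :
    g.support.card ≤ 5 := by
  set h := x * g * x⁻¹ with hh
  set t := g * h * g⁻¹ * h⁻¹ with hht
  have htG : t ∈ G := by
    refine G.mul_mem (G.mul_mem (G.mul_mem hgG ?_) (G.inv_mem hgG)) (G.inv_mem ?_) <;>
      exact G.mul_mem (G.mul_mem hxG hgG) (G.inv_mem hxG)
  have htne : t ≠ 1 := t_ne_one hα hxα hxβ
  have h1 : g.support.card ≤ t.support.card := hmin t htG htne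
  set E := g.support ∩ h.support with hE
  have hEeq : E = insert α {g α} := by
    rw [hE, hh, E_structure hα hxα hxβ, hKs]
    simp [hxs]
  have h2 : t.support ⊆
      insert α (insert (g α) (insert (g (g α)) (insert (h α) {h (g α)}))) := by
    intro z hz
    have := comm_support_subset g h hz
    rw [← hE, hEeq] at this
    simp only [image_insert, image_singleton, mem_union, mem_insert, mem_singleton] at this
    simp only [mem_insert, mem_singleton]
    tauto
  calc g.support.card ≤ t.support.card := h1
    _ ≤ _ := card_le_card h2
    _ ≤ 5 := by
        refine (card_insert_le _ _).trans ?_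
        have h4 := card_insert_le (g (g α))
          (insert (h α) ({h (g α)} : Finset (Fin n)))
        have h5 := card_insert_le (h α) ({h (g α)} : Finset (Fin n))
        have h6 := card_insert_le (g α)
          (insert (g (g α)) (insert (h α) ({h (g α)} : Finset (Fin n))))
        simp only [card_singleton] at *
        omega
end PerX
section Glob


include h2 in
set_option maxHeartbeats 3000000 in
lemma main_contradiction {g : Perm (Fin n)} (hgG : g ∈ G)
    (hmin : ∀ y ∈ G, y ≠ 1 → g.support.card ≤ y.support.card)
    (hm4 : 4 ≤ g.support.card) (hn : 4 * g.support.card < n) : False := by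
  set S := g.support with hS
  set m := S.card with hm
  obtain ⟨α, hα⟩ : S.Nonempty := card_pos.1 (by omega)
  set β := g α with hβdef
  have hβS : β ∈ S := apply_mem_support.2 hα
  have hβα : β ≠ α := mem_support.1 hα
  have hαβ : α ≠ β := hβα.symm
  set S2 := S \ {α, β} with hS2
  have hS2card : S2.card + 2 = m := by
    have hsub : ({α, β} : Finset (Fin n)) ⊆ S := by
      intro t ht
      simp only [mem_insert, mem_singleton] at ht
      rcases ht with rfl | rfl
      exacts [hα, hβS]
    rw [hS2, card_sdiff_of_subset hsub]
    have h2' : ({α, β} : Finset (Fin n)).card = 2 := by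
      rw [card_insert_of_notMem (by simp [hαβ]), card_singleton]
    rw [h2']
    have : 2 ≤ m := by omega
    omega
  set w := (Cset G α β α β).card with hw
  have hw1 : 1 ≤ w := card_pos.2 (Cset_nonempty G h2 hαβ hαβ)
  set Y := univ.filter (fun x : Perm (Fin n) => x ∈ G ∧ x α = α ∧ x β ∉ S) with hY
  set p := Sᶜ.card with hp
  have hpn : m + p = n := by
    rw [hm, hp]
    rw [Finset.card_add_card_compl]
    simp
  have hpbig : 3 * m + 1 ≤ p := by omega
  -- |Y| = p * w
  have hYcard : Y.card = p * w := by
    rw [card_eq_sum_card_fiberwise (f := fun x => x β) (t := Sᶜ)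
      (fun x hx => by simp only [hY, mem_coe, mem_filter] at hx; simpa using hx.2.2.2)]
    have hterm : ∀ γ ∈ Sᶜ, (Y.filter (fun x => x β = γ)).card = w := by
      intro γ hγ
      have hγα : α ≠ γ := by
        intro h; rw [← h] at hγ; simp only [mem_compl] at hγ; exact hγ hα
      have hEq : Y.filter (fun x => x β = γ) = Cset G α β α γ := by
        ext x
        simp only [hY, Cset, mem_filter, mem_univ, true_and]
        constructor
        · rintro ⟨⟨hxG, hxα, _⟩, hxβ⟩; exact ⟨hxG, hxα, hxβ⟩
        · rintro ⟨hxG, hxα, hxβ⟩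
          refine ⟨⟨hxG, hxα, ?_⟩, hxβ⟩
          rw [hxβ]; simpa using hγ
      rw [hEq, hw]
      exact Cset_card_eq G h2 hαβ hγα hαβ hαβ
    rw [Finset.sum_congr rfl hterm, Finset.sum_const, smul_eq_mul]
  -- kext and T
  set kext := fun x : Perm (Fin n) => ((S2.filter (fun s => x s ∈ S))).card with hkext
  set T := ∑ x ∈ Y, kext x with hT
  -- pointwise bound
  have hpoint : ∀ x ∈ Y, m ≤ 3 * (1 + kext x) := by
    intro x hx
    simp only [hY, mem_filter, mem_univ, true_and] at hx
    exact key_pointwise G hgG hx.1 hmin hα hx.2.1 hx.2.2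
  -- lower bounds on T
  have hT1 : Y.card ≤ T := by
    rw [hT]
    calc Y.card = ∑ _x ∈ Y, 1 := by simp
      _ ≤ ∑ x ∈ Y, kext x := sum_le_sum (fun x hx => by have := hpoint x hx; omega)
  have hT3 : Y.card * (m - 3) ≤ 3 * T := by
    calc Y.card * (m - 3) = ∑ _x ∈ Y, (m - 3) := by rw [sum_const, smul_eq_mul]
      _ ≤ ∑ x ∈ Y, 3 * kext x := sum_le_sum (fun x hx => by have := hpoint x hx; omega)
      _ = 3 * T := by rw [hT, mul_sum]
  have hT2 : 7 ≤ m → 2 * Y.card ≤ T := by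
    intro h7
    calc 2 * Y.card = ∑ _x ∈ Y, 2 := by rw [sum_const, smul_eq_mul]; ring
      _ ≤ ∑ x ∈ Y, kext x := sum_le_sum (fun x hx => by have := hpoint x hx; omega)
  -- upper bound on T
  have hswap : T = ∑ s ∈ S2, (Y.filter (fun x => x s ∈ S)).card := by
    calc T = ∑ x ∈ Y, ∑ s ∈ S2, if x s ∈ S then 1 else 0 := by
          rw [hT]
          exact sum_congr rfl fun x _ => card_filter _ _
      _ = ∑ s ∈ S2, ∑ x ∈ Y, if x s ∈ S then 1 else 0 := sum_comm
      _ = ∑ s ∈ S2, (Y.filter (fun x => x s ∈ S)).card :=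
          sum_congr rfl fun s _ => by rw [card_filter]
  have hclass : ∀ s ∈ S2, ∀ s' : Fin n, s' ≠ α →
      (Y.filter (fun x => x s = s')).card ≤ (Cset G α s α s').card := by
    intro s hs2 s' _
    apply card_le_card
    intro x hx
    simp only [hY, mem_filter, mem_univ, true_and] at hx
    simp only [Cset, mem_filter, mem_univ, true_and]
    exact ⟨hx.1.1, hx.1.2.1, hx.2⟩
  have hCw : ∀ s ∈ S2, ∀ s' : Fin n, s' ≠ α → (Cset G α s α s').card = w := by
    intro s hs2 s' hs'
    have hαs : α ≠ s := by
      have := (mem_sdiff.1 hs2).2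
      simp only [mem_insert, mem_singleton] at this
      push_neg at this
      exact fun h => this.1 h.symm
    rw [hw]
    exact Cset_card_eq G h2 hαs (Ne.symm hs') hαβ hαβ
  have hper : ∀ s ∈ S2, (Y.filter (fun x => x s ∈ S)).card + 1 ≤ (m - 1) * w := by
    intro s hs2
    have hsS : s ∈ S := (mem_sdiff.1 hs2).1
    have hsprop := (mem_sdiff.1 hs2).2
    simp only [mem_insert, mem_singleton] at hsprop
    push_neg at hsprop
    obtain ⟨hsα, hsβ⟩ := hsprop
    have hfib : (Y.filter (fun x => x s ∈ S)).card
        = ∑ s' ∈ S, ((Y.filter (fun x => x s ∈ S)).filter (fun x => x s = s')).card :=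
      card_eq_sum_card_fiberwise (fun x hx => (mem_filter.1 hx).2)
    have hfib2 : ∀ s' ∈ S, ((Y.filter (fun x => x s ∈ S)).filter (fun x => x s = s'))
        = Y.filter (fun x => x s = s') := by
      intro s' hs'
      ext x
      simp only [mem_filter]
      constructor
      · tauto
      · rintro ⟨h1, h2⟩
        exact ⟨⟨h1, by rw [h2]; exact hs'⟩, h2⟩
    have hcα : (Y.filter (fun x => x s = α)).card = 0 := by
      rw [card_eq_zero]
      rw [eq_empty_iff_forall_notMem]
      intro x hx
      simp only [hY, mem_filter, mem_univ, true_and] at hx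
      exact hsα (x.injective (hx.2.trans hx.1.2.1.symm))
    have hcdiag : (Y.filter (fun x => x s = s)).card + 1 ≤ w := by
      have hone : (1 : Perm (Fin n)) ∈ Cset G α s α s := by
        simp only [Cset, mem_filter, mem_univ, true_and]
        exact ⟨G.one_mem, rfl, rfl⟩
      have hsubs : Y.filter (fun x => x s = s) ⊆ (Cset G α s α s).erase 1 := by
        intro x hx
        simp only [hY, mem_filter, mem_univ, true_and] at hx
        rw [mem_erase]
        constructor
        · intro hx1
          apply hx.1.2.2
          rw [hx1]
          simpa using hβS
        · simp only [Cset, mem_filter, mem_univ, true_and]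
          exact ⟨hx.1.1, hx.1.2.1, hx.2⟩
      have := card_le_card hsubs
      rw [card_erase_of_mem hone, hCw s hs2 s hsα.symm.symm] at this
      have hsne : s ≠ α := hsα
      have hww : (Cset G α s α s).card = w := hCw s hs2 s hsne
      omega
    -- decompose the sum over S
    have hαmem : α ∈ S := hα
    have hsmem : s ∈ S.erase α := mem_erase.2 ⟨hsα, hsS⟩
    have hrest : ∑ s' ∈ (S.erase α).erase s, (Y.filter (fun x => x s = s')).card
        ≤ ((S.erase α).erase s).card * w := by
      have : ∀ s' ∈ (S.erase α).erase s, (Y.filter (fun x => x s = s')).card ≤ w := by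
        intro s' hs'
        have hs'α : s' ≠ α := (mem_erase.1 (mem_erase.1 hs').2).1
        exact le_of_le_of_eq (hclass s hs2 s' hs'α) (hCw s hs2 s' hs'α)
      calc ∑ s' ∈ (S.erase α).erase s, (Y.filter (fun x => x s = s')).card
          ≤ ∑ _s' ∈ (S.erase α).erase s, w := sum_le_sum this
        _ = ((S.erase α).erase s).card * w := by rw [sum_const, smul_eq_mul]
    have hcarderase : ((S.erase α).erase s).card = m - 2 := by
      rw [card_erase_of_mem hsmem, card_erase_of_mem hαmem]
      omega
    have hsum1 : ∑ s' ∈ S, (Y.filter (fun x => x s = s')).card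
        = (Y.filter (fun x => x s = α)).card
          + ∑ s' ∈ S.erase α, (Y.filter (fun x => x s = s')).card :=
      (Finset.add_sum_erase S _ hαmem).symm
    have hsum2 : ∑ s' ∈ S.erase α, (Y.filter (fun x => x s = s')).card
        = (Y.filter (fun x => x s = s)).card
          + ∑ s' ∈ (S.erase α).erase s, (Y.filter (fun x => x s = s')).card :=
      (Finset.add_sum_erase _ _ hsmem).symm
    have hmul : (m - 1) * w = (m - 2) * w + w := by
      have e1 : m - 1 = (m - 2) + 1 := by omega
      rw [e1, add_mul, one_mul]
    have hfib' : (Y.filter (fun x => x s ∈ S)).card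
        = ∑ s' ∈ S, (Y.filter (fun x => x s = s')).card := by
      rw [hfib]
      exact Finset.sum_congr rfl (fun s' hs' => by rw [hfib2 s' hs'])
    rw [hfib', hsum1, hsum2, hcα, hmul]
    rw [hcarderase] at hrest
    omega
  have hTup : T + S2.card ≤ S2.card * ((m - 1) * w) := by
    calc T + S2.card = ∑ s ∈ S2, ((Y.filter (fun x => x s ∈ S)).card + 1) := by
          rw [sum_add_distrib, sum_const, smul_eq_mul, mul_one, hswap]
      _ ≤ ∑ _s ∈ S2, (m - 1) * w := sum_le_sum hper
      _ = S2.card * ((m - 1) * w) := by rw [sum_const, smul_eq_mul]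
  -- FINAL CASE ANALYSIS
  have hS2c : S2.card = m - 2 := by omega
  rw [hS2c] at hTup
  by_cases hm10 : 10 ≤ m
  · -- large case
    obtain ⟨k, hk⟩ : ∃ k, m = 10 + k := ⟨m - 10, by omega⟩
    have hA1 : (3 * (10 + k) + 1) * w ≤ p * w := by
      apply Nat.mul_le_mul_right
      omega
    have hT3' : (p * w) * (k + 7) ≤ 3 * T := by
      rw [← hYcard]
      have e : m - 3 = k + 7 := by omega
      rw [← e]
      exact hT3
    have hchain : ((3 * (10 + k) + 1) * w) * (k + 7) ≤ 3 * T :=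
      le_trans (Nat.mul_le_mul_right _ hA1) hT3'
    have hkey3 : 3 * T + 3 * (k + 8) ≤ 3 * ((k + 8) * ((k + 9) * w)) := by
      have e1 : m - 2 = k + 8 := by omega
      have e2 : m - 1 = k + 9 := by omega
      rw [e1, e2] at hTup
      omega
    have hexpand : ((3 * (10 + k) + 1) * w) * (k + 7)
        = 3 * ((k + 8) * ((k + 9) * w)) + ((k + 1) * w + 0) := by ring
    have hfinal : 3 * ((k + 8) * ((k + 9) * w)) + ((k + 1) * w + 3 * (k + 8))
        ≤ 3 * ((k + 8) * ((k + 9) * w)) + 0 := by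
      calc 3 * ((k + 8) * ((k + 9) * w)) + ((k + 1) * w + 3 * (k + 8))
          = (((3 * (10 + k) + 1) * w) * (k + 7)) + 3 * (k + 8) := by rw [hexpand]; ring
        _ ≤ 3 * T + 3 * (k + 8) := by omega
        _ ≤ 3 * ((k + 8) * ((k + 9) * w)) := hkey3
        _ = 3 * ((k + 8) * ((k + 9) * w)) + 0 := by ring
    have := Nat.le_of_add_le_add_left hfinal
    omega
  · -- m between 4 and 9
    have hm9 : m ≤ 9 := by omega
    have hA1 : (3 * m + 1) * w ≤ p * w := Nat.mul_le_mul_right w hpbig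
    have hchain1 : (3 * m + 1) * w ≤ T := by
      calc (3 * m + 1) * w ≤ p * w := hA1
        _ = Y.card := hYcard.symm
        _ ≤ T := hT1
    have hm456789 : m = 4 ∨ m = 5 ∨ m = 6 ∨ m = 7 ∨ m = 8 ∨ m = 9 := by omega
    rcases hm456789 with hmv | hmv | hmv | hmv | hmv | hmv
    · rw [hmv] at hTup hchain1; omega
    · rw [hmv] at hTup hchain1; omega
    · -- m = 6
      by_cases hp20 : 20 ≤ p
      · have hA2 : 20 * w ≤ p * w := Nat.mul_le_mul_right w hp20
        have : 20 * w ≤ T := by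
          calc 20 * w ≤ p * w := hA2
            _ = Y.card := hYcard.symm
            _ ≤ T := hT1
        rw [hmv] at hTup
        omega
      · -- p = 19, n = 25 : the special pigeonhole
        have hp19 : p = 19 := by omega
        set Y3 := Y.filter (fun x => 2 ≤ kext x) with hY3
        set Y2 := Y.filter (fun x => ¬ 2 ≤ kext x) with hY2
        have hsplitc : Y3.card + Y2.card = Y.card :=
          card_filter_add_card_filter_not _
        have hTsplit : T = ∑ x ∈ Y3, kext x + ∑ x ∈ Y2, kext x := by
          rw [hT, hY3, hY2]
          exact (sum_filter_add_sum_filter_not Y (fun x => 2 ≤ kext x) kext).symm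
        have hlow3 : 2 * Y3.card ≤ ∑ x ∈ Y3, kext x := by
          calc 2 * Y3.card = ∑ _x ∈ Y3, 2 := by rw [sum_const, smul_eq_mul]; ring
            _ ≤ ∑ x ∈ Y3, kext x :=
                sum_le_sum (fun x hx => (mem_filter.1 hx).2)
        have hlow2 : Y2.card ≤ ∑ x ∈ Y2, kext x := by
          calc Y2.card = ∑ _x ∈ Y2, 1 := by rw [sum_const, smul_eq_mul]; ring
            _ ≤ ∑ x ∈ Y2, kext x := by
                refine sum_le_sum (fun x hx => ?_)
                have hxY : x ∈ Y := (mem_filter.1 hx).1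
                have := hpoint x hxY
                omega
        -- card bound on Y2 via pigeonhole over S2 ×ˢ S2
        have hY2sub : Y2 ⊆ (S2 ×ˢ S2).biUnion
            (fun q => Y2.filter (fun x => x q.1 = q.2)) := by
          intro x hx
          have hxY : x ∈ Y := (mem_filter.1 hx).1
          have hk1 : kext x = 1 := by
            have h1 := (mem_filter.1 hx).2
            have := hpoint x hxY
            rw [hmv] at this
            omega
          rw [hkext] at hk1
          obtain ⟨s, hsEq⟩ := card_eq_one.1 hk1
          have hsmem : s ∈ S2.filter (fun s => x s ∈ S) := by rw [hsEq]; simp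
          have hs2 : s ∈ S2 := (mem_filter.1 hsmem).1
          have hxsS : x s ∈ S := (mem_filter.1 hsmem).2
          simp only [hY, mem_filter, mem_univ, true_and] at hxY
          obtain ⟨hxG, hxα, hxβ⟩ := hxY
          have hsα : s ≠ α := by
            have := (mem_sdiff.1 hs2).2
            simp only [mem_insert, mem_singleton] at this
            tauto
          have hxsα : x s ≠ α := by
            intro h
            exact hsα (x.injective (h.trans hxα.symm))
          have hxsβ : x s ≠ β := by
            intro h
            have h5 := key_refined G hgG hxG hmin hα hxα hxβ hsEq h
            rw [← hS, ← hm, hmv] at h5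
            omega
          rw [mem_biUnion]
          refine ⟨(s, x s), mem_product.2 ⟨hs2, ?_⟩, mem_filter.2 ⟨hx, rfl⟩⟩
          rw [hS2, mem_sdiff]
          refine ⟨hxsS, ?_⟩
          simp [hxsα, hxsβ]
        have hY2card : Y2.card ≤ 16 * w := by
          calc Y2.card ≤ ((S2 ×ˢ S2).biUnion
              (fun q => Y2.filter (fun x => x q.1 = q.2))).card := card_le_card hY2sub
            _ ≤ ∑ q ∈ S2 ×ˢ S2, (Y2.filter (fun x => x q.1 = q.2)).card :=
                card_biUnion_le
            _ ≤ ∑ _q ∈ S2 ×ˢ S2, w := by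
                refine sum_le_sum (fun q hq => ?_)
                obtain ⟨hq1, hq2⟩ := mem_product.1 hq
                have hq2α : q.2 ≠ α := by
                  have := (mem_sdiff.1 hq2).2
                  simp only [mem_insert, mem_singleton] at this
                  tauto
                refine le_of_le_of_eq (card_le_card ?_) (hCw q.1 hq1 q.2 hq2α)
                intro x hx
                obtain ⟨hxY2, hxq⟩ := mem_filter.1 hx
                have hxY : x ∈ Y := (mem_filter.1 hxY2).1
                simp only [hY, mem_filter, mem_univ, true_and] at hxY
                simp only [Cset, mem_filter, mem_univ, true_and]
                exact ⟨hxY.1, hxY.2.1, hxq⟩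
            _ = 16 * w := by
                rw [sum_const, smul_eq_mul, card_product]
                have : S2.card = 4 := by omega
                rw [this]
        rw [hmv] at hTup
        rw [hp19] at hYcard
        omega
    · rw [hmv] at hTup hchain1
      have h2Y := hT2 (by omega)
      rw [hYcard] at h2Y
      have hA2 : 2 * ((3 * m + 1) * w) ≤ 2 * (p * w) := by
        rw [hmv]
        have : (22 : ℕ) * w ≤ p * w := Nat.mul_le_mul_right w (by omega)
        omega
      rw [hmv] at hA2
      omega
    · rw [hmv] at hTup
      have h2Y := hT2 (by omega)
      rw [hYcard] at h2Y
      have : (25 : ℕ) * w ≤ p * w := Nat.mul_le_mul_right w (by omega)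
      omega
    · rw [hmv] at hTup
      have h2Y := hT2 (by omega)
      rw [hYcard] at h2Y
      have : (28 : ℕ) * w ≤ p * w := Nat.mul_le_mul_right w (by omega)
      omega
end Glob
end CountingAux

section Final
variable {n : ℕ} (G : Subgroup (Perm (Fin n)))
  (h2 : ∀ a b c d : Fin n, a ≠ b → c ≠ d → ∃ σ ∈ G, σ a = c ∧ σ b = d)

set_option maxHeartbeats 1000000 in
include h2 in
lemma alternating_le_of_small (g : Perm (Fin n)) (hgG : g ∈ G) (hg1 : g ≠ 1)
    (hsmall : 4 * g.support.card < n) : alternatingGroup (Fin n) ≤ G := by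
  have hne : (univ.filter (fun x : Perm (Fin n) => x ∈ G ∧ x ≠ 1)).Nonempty :=
    ⟨g, by simp [hgG, hg1]⟩
  obtain ⟨g₀, hg₀mem, hg₀min⟩ :=
    Finset.exists_min_image _ (fun x : Perm (Fin n) => x.support.card) hne
  simp only [mem_filter, mem_univ, true_and] at hg₀mem
  obtain ⟨hg₀G, hg₀1⟩ := hg₀mem
  have hmin : ∀ y ∈ G, y ≠ 1 → g₀.support.card ≤ y.support.card := fun y hyG hy1 =>
    hg₀min y (by simp [hyG, hy1])
  have hmle : g₀.support.card ≤ g.support.card := hmin g hgG hg1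
  have h2le : 2 ≤ g₀.support.card := by
    have h0 : g₀.support.card ≠ 0 := by
      simp only [ne_eq, card_eq_zero, Equiv.Perm.support_eq_empty_iff]
      exact hg₀1
    have h1 : g₀.support.card ≠ 1 := Equiv.Perm.card_support_ne_one _
    omega
  rcases lt_or_ge g₀.support.card 4 with hlt4 | hge4
  · rcases (by omega : g₀.support.card = 2 ∨ g₀.support.card = 3) with hc | hc
    · obtain ⟨a, b, hab, hswap⟩ := Equiv.Perm.card_support_eq_two.1 hc
      have hallswap : ∀ u v : Fin n, u ≠ v → Equiv.swap u v ∈ G := by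
        intro u v huv
        obtain ⟨σ, hσ, ha, hb⟩ := h2 a b u v hab huv
        have hmem : σ * Equiv.swap a b * σ⁻¹ ∈ G :=
          G.mul_mem (G.mul_mem hσ (hswap ▸ hg₀G)) (G.inv_mem hσ)
        rwa [← Equiv.swap_apply_apply, ha, hb] at hmem
      have htop : (⊤ : Subgroup (Perm (Fin n))) ≤ G := by
        rw [← Equiv.Perm.closure_isSwap, Subgroup.closure_le]
        intro τ hτ
        obtain ⟨u, v, huv, rfl⟩ := hτ
        exact hallswap u v huv
      exact le_trans le_top htop
    · obtain ⟨a, b, c, hab, hbc, hac, heq⟩ := perm_eq_rho g₀ hc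
      have hrmem : rho a b c ∈ G := heq ▸ hg₀G
      have hall := rho_all_mem G h2 hab hbc hac hrmem
      rw [← Equiv.Perm.closure_three_cycles_eq_alternating, Subgroup.closure_le]
      intro τ hτ
      obtain ⟨u, v, w, huv, hvw, huw, rfl⟩ := perm_eq_rho τ hτ.card_support
      exact hall u v w huv hvw huw
  · exact absurd (main_contradiction G h2 hg₀G hmin hge4 (by omega)) (fun h => h)

end Final

/-- If `G ≤ Sₙ` is doubly transitive and does not contain the alternating group, then
every nonidentity element of `G` moves at least `n/4` points. -/
theorem stmt14 (n : ℕ) (G : Subgroup (Equiv.Perm (Fin n)))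
    (h2trans : ∀ a b c d : Fin n, a ≠ b → c ≠ d →
      ∃ σ ∈ G, σ a = c ∧ σ b = d)
    (hA : ¬ alternatingGroup (Fin n) ≤ G) :
    ∀ g ∈ G, g ≠ 1 → (n : ℝ) / 4 ≤ (g.support.card : ℝ) := by
  intro g hgG hg1
  by_contra hlt
  push_neg at hlt
  have h4 : 4 * g.support.card < n := by
    have h4' : (g.support.card : ℝ) * 4 < (n:ℝ) :=
      (lt_div_iff₀ (by norm_num : (0:ℝ) < 4)).mp hlt
    have h4n : g.support.card * 4 < n := by exact_mod_cast h4'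
    omega

  exact hA (alternating_le_of_small G h2trans g hgG hg1 h4)
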